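/- Let Σ be a finite alphabet with at least two letters, let 𝒜 be a synchronizing automaton over Σ with n states, and let I = Syn(𝒜). If for some natural number ℓ with 16ℓ ≤ 4‖I‖ + 1 there exists a word x of length ℓ over Σ that is not a factor of any word of 𝓜(I), then 4‖I‖ ≤ (2n−1)²; equivalently, the shortest reset word of 𝒜 has length at most (n − 1/2)², i.e. ‖I‖ ≤ n(n−1). -/

import Mathlib

/-- The action of a word on a state: `actW δ q w` is `q · w`. -/
def actW {A Q : Type*} (δ : Q → A → Q) (q : Q) (w : List A) : Q := w.foldl δ q

/-- The set of reset (synchronizing) words of the automaton `(Q, δ)`. -/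
def SynSet {A Q : Type*} (δ : Q → A → Q) : Set (List A) :=
  {w | ∃ q : Q, ∀ p : Q, actW δ p w = q}

/-- `I` is a two-sided ideal of `Σ*`. -/
def IsIdealLang {A : Type*} (I : Set (List A)) : Prop :=
  ∀ x u y : List A, u ∈ I → x ++ u ++ y ∈ I

/-- The set of minimal words of an ideal: `𝓜(I) = I \ (Σ⁺I ∪ IΣ⁺)`. -/
def MinWords {A : Type*} (I : Set (List A)) : Set (List A) :=
  I \ ({w | ∃ x u : List A, x ≠ [] ∧ u ∈ I ∧ w = x ++ u} ∪
       {w | ∃ u x : List A, u ∈ I ∧ x ≠ [] ∧ w = u ++ x})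

/-- `‖I‖`, the minimal length of a word of `I`. -/
noncomputable def normL {A : Type*} (I : Set (List A)) : ℕ :=
  sInf {k | ∃ u ∈ I, u.length = k}

namespace Stmt2Aux

lemma actW_append {A Q : Type*} (δ : Q → A → Q) (q : Q) (u v : List A) :
    actW δ q (u ++ v) = actW δ (actW δ q u) v := List.foldl_append

/-- Every word of an ideal-like set has a factor that is a minimal word. -/
lemma exists_minWords_infix {A : Type*} {I : Set (List A)} :
    ∀ (N : ℕ) (u : List A), u.length ≤ N → u ∈ I → ∃ g, g <:+: u ∧ g ∈ MinWords I := by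
  intro N
  induction N with
  | zero =>
    intro u hlen hu
    refine ⟨u, List.infix_rfl, hu, ?_⟩
    rintro (⟨a, v, ha, hv, huav⟩ | ⟨v, a, hv, ha, huav⟩) <;>
    · apply ha
      rw [← List.length_eq_zero_iff]
      have := congrArg List.length huav
      simp only [List.length_append] at this
      omega
  | succ N ih =>
    intro u hlen hu
    by_cases hdec : u ∈ ({w | ∃ a v : List A, a ≠ [] ∧ v ∈ I ∧ w = a ++ v} ∪
        {w | ∃ v a : List A, v ∈ I ∧ a ≠ [] ∧ w = v ++ a} : Set (List A))
    · rcases hdec with ⟨a, v, ha, hv, huav⟩ | ⟨v, a, hv, ha, huav⟩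
      · have hav : 0 < a.length := List.length_pos_iff.mpr ha
        have hvlen : v.length ≤ N := by
          have := congrArg List.length huav
          simp only [List.length_append] at this
          omega
        obtain ⟨g, h1, h2⟩ := ih v hvlen hv
        exact ⟨g, h1.trans (by rw [huav]; exact (List.suffix_append a v).isInfix), h2⟩
      · have hav : 0 < a.length := List.length_pos_iff.mpr ha
        have hvlen : v.length ≤ N := by
          have := congrArg List.length huav
          simp only [List.length_append] at this
          omega
        obtain ⟨g, h1, h2⟩ := ih v hvlen hv
        exact ⟨g, h1.trans (by rw [huav]; exact (List.prefix_append v a).isInfix), h2⟩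
    · exact ⟨u, List.infix_rfl, hu, hdec⟩

/-- Any pair of states of a synchronizing automaton can be merged by a word of
length at most `n.choose 2`. -/
lemma merge_bound {A Q : Type*} [Fintype Q] (δ : Q → A → Q) (w₀ : List A)
    (hw : w₀ ∈ SynSet δ) (p q : Q) :
    ∃ e : List A, actW δ p e = actW δ q e ∧ e.length ≤ (Fintype.card Q).choose 2 := by
  classical
  set S : Set ℕ := {k | ∃ e : List A, e.length = k ∧ actW δ p e = actW δ q e} with hS
  have hne : S.Nonempty := by
    obtain ⟨r, hr⟩ := hw
    exact ⟨w₀.length, w₀, rfl, by rw [hr p, hr q]⟩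
  obtain ⟨e, he_len, he⟩ := Nat.sInf_mem hne
  refine ⟨e, he, ?_⟩
  by_contra hlt
  push_neg at hlt
  set N := e.length with hN
  -- the pairs at times 0..N-1 are distinct non-diagonal pairs
  have key : ∀ t : Fin N, ¬ (Sym2.mk (actW δ p (e.take t)) (actW δ q (e.take t))).IsDiag := by
    intro t hdiag
    rw [Sym2.mk_isDiag_iff] at hdiag
    have hmem : (e.take (t : ℕ)).length ∈ S := ⟨e.take t, rfl, hdiag⟩
    have h1 := Nat.sInf_le hmem
    rw [List.length_take] at h1
    have h2 := t.isLt
    omega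
  have hcut : ∀ t1 t2 : Fin N, (t1 : ℕ) < (t2 : ℕ) →
      (⟨_, key t1⟩ : {z : Sym2 Q // ¬ z.IsDiag}) = ⟨_, key t2⟩ → False := by
    intro t1 t2 h12 hfeq
    have hpair : (Sym2.mk (actW δ p (e.take t1)) (actW δ q (e.take t1)))
        = Sym2.mk (actW δ p (e.take t2)) (actW δ q (e.take t2)) := congrArg Subtype.val hfeq
    rw [Sym2.eq_iff] at hpair
    set e' : List A := e.take t1 ++ e.drop t2 with he'
    have hp2 : ∀ r : Q, actW δ r e = actW δ (actW δ r (e.take (t2:ℕ))) (e.drop (t2:ℕ)) := by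
      intro r
      conv_lhs => rw [← List.take_append_drop (t2 : ℕ) e]
      rw [actW_append]
    have hmerge : actW δ p e' = actW δ q e' := by
      rw [he', actW_append, actW_append]
      rcases hpair with ⟨h1, h2⟩ | ⟨h1, h2⟩
      · rw [h1, h2, ← hp2 p, ← hp2 q, he]
      · rw [h1, h2, ← hp2 p, ← hp2 q, he]
    have hmem : e'.length ∈ S := ⟨e', rfl, hmerge⟩
    have h1 := Nat.sInf_le hmem
    have h2 : e'.length = (t1 : ℕ) + (e.length - (t2 : ℕ)) := by
      rw [he', List.length_append, List.length_take, List.length_drop]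
      have := t1.isLt
      omega
    have h3 := t2.isLt
    omega
  have hcard : Fintype.card {z : Sym2 Q // ¬ z.IsDiag} < Fintype.card (Fin N) := by
    rw [Sym2.card_subtype_not_diag, Fintype.card_fin]
    omega
  obtain ⟨t1, t2, hne12, hfeq⟩ := Fintype.exists_ne_map_eq_of_card_lt
    (fun t : Fin N => (⟨_, key t⟩ : {z : Sym2 Q // ¬ z.IsDiag})) hcard
  rcases lt_or_gt_of_ne (fun h : (t1 : ℕ) = (t2 : ℕ) => hne12 (Fin.ext h)) with h | h
  · exact hcut t1 t2 h hfeq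
  · exact hcut t2 t1 h hfeq.symm

/-- Decomposition of an infix of a concatenation. -/
lemma infix_append_cases {A : Type*} {g B C : List A} (h : g <:+: B ++ C) :
    g <:+: B ∨ g <:+: C ∨ ∃ s t, s <:+ B ∧ t <+: C ∧ g = s ++ t := by
  obtain ⟨u, v, huv⟩ := h
  rw [List.append_assoc] at huv
  rcases List.append_eq_append_iff.mp huv with ⟨a, hB, hgv⟩ | ⟨c, hu, hC⟩
  · rcases List.append_eq_append_iff.mp hgv with ⟨b, ha, hv⟩ | ⟨d, hg, hC2⟩
    · -- a = g ++ b : g is an infix of B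
      left
      exact ⟨u, b, by rw [hB, ha, List.append_assoc]⟩
    · -- g = a ++ d, C = d ++ v
      right; right
      exact ⟨a, d, ⟨u, hB.symm⟩, ⟨v, hC2.symm⟩, hg⟩
  · right; left
    exact ⟨c, v, by rw [hC, List.append_assoc]⟩

lemma suffix_of_suffix_length_le' {A : Type*} {x s γ : List A}
    (hx : x <:+ γ) (hs : s <:+ γ) (h : x.length ≤ s.length) : x <:+ s := by
  rw [← List.reverse_prefix] at hx hs ⊢
  exact List.prefix_of_prefix_length_le hx hs (by simpa using h)

end Stmt2Aux

open Stmt2Aux in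
/-- if the set of minimal reset words of a synchronizing automaton with
`n` states misses a factor of length `ℓ` with `16ℓ ≤ 4‖I‖ + 1`, where `I = Syn(𝒜)`,
then `4‖I‖ ≤ (2n-1)²`, i.e. the shortest reset word has length at most `(n - 1/2)²`. -/
theorem stmt2 {A Q : Type*} [Fintype A] [Fintype Q] [Nonempty Q]
    (hA : 1 < Fintype.card A)
    (δ : Q → A → Q) (n : ℕ) (hn : Fintype.card Q = n)
    (hsync : (SynSet δ).Nonempty)
    (ℓ : ℕ) (hℓ : 16 * ℓ ≤ 4 * normL (SynSet δ) + 1)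
    (x : List A) (hx : x.length = ℓ)
    (hmiss : ∀ w ∈ MinWords (SynSet δ), ¬ x <:+: w) :
    4 * normL (SynSet δ) ≤ (2 * n - 1) ^ 2 := by
  classical
  obtain ⟨w₀, hw₀⟩ := hsync
  set m := normL (SynSet δ) with hm
  set c2 := (Fintype.card Q).choose 2 with hc2
  have hmle : ∀ u, u ∈ SynSet δ → m ≤ u.length := fun u hu => Nat.sInf_le ⟨u, hu, rfl⟩
  -- ℓ ≥ 1
  obtain ⟨g₀, hg₀i, hg₀m⟩ := exists_minWords_infix w₀.length w₀ le_rfl hw₀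
  have hℓ1 : 1 ≤ ℓ := by
    by_contra h0
    apply hmiss g₀ hg₀m
    have hxnil : x = [] := List.length_eq_zero_iff.mp (by omega)
    rw [hxnil]
    exact ⟨[], g₀, rfl⟩
  -- the main loop: repeatedly append (merge word ++ x)
  have loop : ∀ k (γ : List A), x <:+ γ →
      (∀ g, g <:+: γ → ¬ x <:+: g → g.length + 2 ≤ 2 * ℓ + c2) →
      (Finset.image (fun p => actW δ p γ) Finset.univ).card ≤ k →
      ∃ γ', γ' ∈ SynSet δ ∧
        ∀ g, g <:+: γ' → ¬ x <:+: g → g.length + 2 ≤ 2 * ℓ + c2 := by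
    intro k
    induction k with
    | zero =>
      intro γ _ _ hcard
      exfalso
      have hnonempty : (Finset.image (fun p => actW δ p γ) Finset.univ).Nonempty :=
        ⟨actW δ (Classical.arbitrary Q) γ, Finset.mem_image_of_mem _ (Finset.mem_univ _)⟩
      have := Finset.card_pos.mpr hnonempty
      omega
    | succ k ih =>
      intro γ hsuf hW hcard
      by_cases h1 : (Finset.image (fun p => actW δ p γ) Finset.univ).card ≤ 1
      · -- the image is a singleton : γ is a reset word
        have hnonempty : (Finset.image (fun p => actW δ p γ) Finset.univ).Nonempty :=
          ⟨actW δ (Classical.arbitrary Q) γ, Finset.mem_image_of_mem _ (Finset.mem_univ _)⟩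
        have hpos := Finset.card_pos.mpr hnonempty
        have hone : (Finset.image (fun p => actW δ p γ) Finset.univ).card = 1 := by omega
        obtain ⟨q, hq⟩ := Finset.card_eq_one.mp hone
        refine ⟨γ, ⟨q, fun p => ?_⟩, hW⟩
        have : actW δ p γ ∈ Finset.image (fun p => actW δ p γ) Finset.univ :=
          Finset.mem_image_of_mem _ (Finset.mem_univ _)
        rw [hq] at this
        exact Finset.mem_singleton.mp this
      · push_neg at h1
        obtain ⟨a, ha, b, hb, hab⟩ := Finset.one_lt_card.mp h1
        obtain ⟨e, he, helen⟩ := merge_bound δ w₀ hw₀ a b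
        have hsuf' : x <:+ γ ++ (e ++ x) := ⟨γ ++ e, by rw [List.append_assoc]⟩
        have hW' : ∀ g, g <:+: γ ++ (e ++ x) → ¬ x <:+: g → g.length + 2 ≤ 2 * ℓ + c2 := by
          intro g hg hgx
          rcases infix_append_cases hg with h | h | ⟨s, t, hsB, htC, rfl⟩
          · exact hW g h hgx
          · -- g is an infix of e ++ x avoiding x, so it is shorter than e ++ x
            have hlen := h.length_le
            have hne : g.length ≠ (e ++ x).length := by
              intro hEq
              apply hgx
              rw [h.eq_of_length hEq]
              exact (List.suffix_append e x).isInfix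
            rw [List.length_append, hx] at hlen hne
            omega
          · -- g = s ++ t with s a suffix of γ, t a prefix of e ++ x
            have hs_short : s.length + 1 ≤ ℓ := by
              by_contra hc
              push_neg at hc
              have hxs : x <:+ s := suffix_of_suffix_length_le' hsuf hsB (by omega)
              exact hgx (hxs.isInfix.trans (List.prefix_append s t).isInfix)
            have ht_le := htC.length_le
            have ht_ne : t.length ≠ (e ++ x).length := by
              intro hEq
              apply hgx
              rw [htC.eq_of_length hEq]
              exact ((List.suffix_append e x).isInfix).trans (List.suffix_append s (e ++ x)).isInfix
            rw [List.length_append, hx] at ht_le ht_ne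
            rw [List.length_append]
            omega
        refine ih (γ ++ (e ++ x)) hsuf' hW' ?_
        -- image cardinality strictly decreases
        have himg : Finset.image (fun p => actW δ p (γ ++ (e ++ x))) Finset.univ
            = Finset.image (fun r => actW δ r (e ++ x))
                (Finset.image (fun p => actW δ p γ) Finset.univ) := by
          rw [Finset.image_image]
          apply Finset.image_congr
          intro p _
          simp only [Function.comp_apply]
          rw [actW_append]
        have hfab : actW δ a (e ++ x) = actW δ b (e ++ x) := by
          rw [actW_append, actW_append, he]
        set S := Finset.image (fun p => actW δ p γ) Finset.univ with hSdef
        have herase : Finset.image (fun r => actW δ r (e ++ x)) S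
            = Finset.image (fun r => actW δ r (e ++ x)) (S.erase b) := by
          apply Finset.Subset.antisymm
          · intro y hy
            obtain ⟨r, hr, rfl⟩ := Finset.mem_image.mp hy
            by_cases hrb : r = b
            · subst hrb
              rw [hfab.symm] at *
              exact Finset.mem_image_of_mem _ (Finset.mem_erase.mpr ⟨hab, ha⟩)
            · exact Finset.mem_image_of_mem _ (Finset.mem_erase.mpr ⟨hrb, hr⟩)
          · exact Finset.image_subset_image (Finset.erase_subset _ _)
        rw [himg, herase]
        have h2 := Finset.card_image_le (s := S.erase b) (f := fun r => actW δ r (e ++ x))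
        have h3 : (S.erase b).card = S.card - 1 := Finset.card_erase_of_mem hb
        omega
  -- start the loop with γ = x
  have hWx : ∀ g, g <:+: x → ¬ x <:+: g → g.length + 2 ≤ 2 * ℓ + c2 := by
    intro g hg hgx
    have h1 := hg.length_le
    have h2 : g.length ≠ x.length := by
      intro hEq
      exact hgx (by rw [hg.eq_of_length hEq])
    rw [hx] at h1 h2
    omega
  have hstart : (Finset.image (fun p => actW δ p x) Finset.univ).card ≤ Fintype.card Q := by
    calc (Finset.image (fun p => actW δ p x) Finset.univ).card
        ≤ Finset.univ.card := Finset.card_image_le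
      _ = Fintype.card Q := Finset.card_univ
  obtain ⟨γ, hγI, hγW⟩ := loop (Fintype.card Q) x List.suffix_rfl hWx hstart
  -- extract a minimal factor of γ
  obtain ⟨g, hgin, hgmin⟩ := exists_minWords_infix γ.length γ le_rfl hγI
  have hgI : g ∈ SynSet δ := hgmin.1
  have h1 : m ≤ g.length := hmle g hgI
  have h2 : g.length + 2 ≤ 2 * ℓ + c2 := hγW g hgin (hmiss g hgmin)
  -- arithmetic
  have h2c2 : 2 * c2 = Fintype.card Q * (Fintype.card Q - 1) := by
    rw [hc2, Nat.choose_two_right]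
    have hev : 2 ∣ Fintype.card Q * (Fintype.card Q - 1) := by
      rcases Nat.even_or_odd (Fintype.card Q) with h | h
      · exact Dvd.dvd.mul_right h.two_dvd _
      · refine Dvd.dvd.mul_left ?_ _
        rcases h with ⟨c, hcq⟩
        exact ⟨c, by omega⟩
    omega
  have hn1 : 1 ≤ n := by
    rw [← hn]
    exact Fintype.card_pos
  obtain ⟨k, rfl⟩ : ∃ k, n = k + 1 := ⟨n - 1, by omega⟩
  rw [hn] at h2c2
  have h2c2' : 2 * c2 = (k + 1) * k := by
    rw [h2c2, Nat.add_sub_cancel]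
  have hsq : (2 * (k + 1) - 1) ^ 2 = 4 * ((k + 1) * k) + 1 := by
    have h' : 2 * (k + 1) - 1 = 2 * k + 1 := by omega
    rw [h']
    ring
  rw [hsq]
  omega
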